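/- Let λ = (λ_1,…,λ_n) ∈ ℝ^n be dominant (λ_1 ≥ λ_2 ≥ … ≥ λ_n) and set ℓ := (1/n)Σ_{i=1}^n λ_i. Let x : V → K_{>0} satisfy x((i,i)) = t^{λ_i} for i = 1,…,n and the critical point conditions at every dot vertex. Then Ξ_i/Ξ_{i+1} = t^ℓ for all i = 1,…,n. -/

import Mathlib

noncomputable section

variable {K : Type*} [Field K]

/-- `s_k := Σ_{j=1}^{k-1} (n - j)`. -/
def sIdx (n k : ℕ) : ℕ := ∑ j ∈ Finset.range (k - 1), (n - (j + 1))

/-- The critical point condition of the GL_n quiver at a dot vertex `(i,j)` (so `1 ≤ j < i ≤ n`),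
for a decoration `x` of the vertices: the sum of the values `x(head)/x(tail)` of the arrows
with head `(i,j)` equals the corresponding sum over the arrows with tail `(i,j)`.  The incoming
arrows are the vertical one from `(i+1,j)` (present iff `i < n`) and the horizontal one from
`(i,j+1)`; the outgoing arrows are the vertical one to `(i-1,j)` and the horizontal one to
`(i,j-1)` (present iff `2 ≤ j`). -/
def critCond (n : ℕ) (x : ℕ → ℕ → K) (i j : ℕ) : Prop :=
  (if i < n then x i j / x (i + 1) j else 0) + x i j / x i (j + 1)
    = x (i - 1) j / x i j + (if 2 ≤ j then x i (j - 1) / x i j else 0)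

/-- The ideal-coordinate decoration: the prescribed value `R_{ij}(m)` of the vertical arrow
with head `(i,j)`. -/
def Rarr (n : ℕ) (m : ℕ → K) (i j : ℕ) : K :=
  (∏ r ∈ Finset.range j, m (sIdx n (j - r) + (i - j + 1 + r))) /
    (∏ r ∈ Finset.range (j - 1), m (sIdx n (j - 1 - r) + (i - j + 1 + r)))

/-- `Ξ_i`: product of the vertex values along the `i`-th diagonal (with `Ξ_{n+1} = 1`). -/
def Xi (n : ℕ) (x : ℕ → ℕ → K) (i : ℕ) : K :=
  ∏ l ∈ Finset.Icc 1 (n + 1 - i), x (i - 1 + l) l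

/-- The field of (generalized) Puiseux series, formalized as Hahn series over `ℝ` with
complex coefficients. -/
abbrev PS : Type := HahnSeries ℝ ℂ

/-- The positive part `K_{>0}`: nonzero series whose lowest-order coefficient is a positive
real number. -/
def PSpos (c : PS) : Prop := c ≠ 0 ∧ ∃ r : ℝ, 0 < r ∧ c.coeff c.order = (r : ℂ)

open HahnSeries

lemma psPos_one : PSpos 1 := by
  refine ⟨one_ne_zero, 1, one_pos, ?_⟩
  rw [order_one]
  simp [coeff_one]

lemma psPos_single (a : ℝ) : PSpos (HahnSeries.single a (1 : ℂ)) := by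
  refine ⟨single_ne_zero one_ne_zero, 1, one_pos, ?_⟩
  rw [order_single one_ne_zero, coeff_single_same]
  simp

lemma psPos_mul {a b : PS} (ha : PSpos a) (hb : PSpos b) : PSpos (a * b) := by
  obtain ⟨ha0, r, hr, har⟩ := ha
  obtain ⟨hb0, s, hs, hbs⟩ := hb
  refine ⟨mul_ne_zero ha0 hb0, r * s, by positivity, ?_⟩
  rw [order_mul ha0 hb0, coeff_mul_order_add_order, leadingCoeff_eq, leadingCoeff_eq, har, hbs]
  push_cast
  ring

lemma psPos_of_mul_right {a b : PS} (hab : PSpos (a * b)) (hb : PSpos b) : PSpos a := by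
  obtain ⟨hab0, r, hr, habr⟩ := hab
  obtain ⟨hb0, s, hs, hbs⟩ := hb
  have ha0 : a ≠ 0 := fun h => hab0 (by rw [h, zero_mul])
  refine ⟨ha0, r / s, by positivity, ?_⟩
  have h1 := coeff_mul_order_add_order a b
  rw [← order_mul ha0 hb0, habr, leadingCoeff_eq, leadingCoeff_eq, hbs] at h1
  have hs0 : (s : ℂ) ≠ 0 := by exact_mod_cast hs.ne'
  push_cast
  rw [eq_div_iff hs0]
  exact h1.symm

lemma psPos_pow {a : PS} (ha : PSpos a) (n : ℕ) : PSpos (a ^ n) := by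
  induction n with
  | zero => simpa using psPos_one
  | succ n ih => rw [pow_succ]; exact psPos_mul ih ha

lemma psPos_add_of_le {a b : PS} (ha : PSpos a) (hb : PSpos b) (hle : a.order ≤ b.order) :
    PSpos (a + b) := by
  obtain ⟨ha0, r, hr, har⟩ := ha
  obtain ⟨hb0, s, hs, hbs⟩ := hb
  have hcoeff : ∃ u : ℝ, 0 < u ∧ (a + b).coeff a.order = (u : ℂ) := by
    rcases eq_or_lt_of_le hle with heq | hlt
    · refine ⟨r + s, by positivity, ?_⟩
      rw [coeff_add, har, heq, hbs]
      push_cast; ring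
    · refine ⟨r, hr, ?_⟩
      rw [coeff_add, har, coeff_eq_zero_of_lt_order hlt, add_zero]
  obtain ⟨u, hu, hcu⟩ := hcoeff
  have hcune : (a + b).coeff a.order ≠ 0 := by
    rw [hcu]; exact_mod_cast hu.ne'
  have hne : a + b ≠ 0 := HahnSeries.ne_zero_of_coeff_ne_zero hcune
  have horder : (a + b).order = a.order := by
    apply le_antisymm (HahnSeries.order_le_of_coeff_ne_zero hcune)
    by_contra hlt'
    push_neg at hlt'
    have hz : (a + b).coeff ((a + b).order) = 0 := by
      rw [coeff_add, coeff_eq_zero_of_lt_order hlt',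
        coeff_eq_zero_of_lt_order (lt_of_lt_of_le hlt' hle), add_zero]
    exact hne (coeff_order_eq_zero.mp hz)
  exact ⟨hne, u, hu, by rw [horder, hcu]⟩

lemma psPos_add {a b : PS} (ha : PSpos a) (hb : PSpos b) : PSpos (a + b) := by
  rcases le_total a.order b.order with h | h
  · exact psPos_add_of_le ha hb h
  · rw [add_comm]; exact psPos_add_of_le hb ha h

lemma psPos_prod {s : Finset ℕ} (hs : s.Nonempty) {f : ℕ → PS}
    (h : ∀ i ∈ s, PSpos (f i)) : PSpos (∏ i ∈ s, f i) := by
  induction hs using Finset.Nonempty.cons_induction with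
  | singleton i => simpa using h i (by simp)
  | cons i s hi hs ih =>
    rw [Finset.prod_cons]
    exact psPos_mul (h i (by simp)) (ih fun j hj => h j (by simp [hj]))

lemma psPos_sum {s : Finset ℕ} (hs : s.Nonempty) {f : ℕ → PS}
    (h : ∀ i ∈ s, PSpos (f i)) : PSpos (∑ i ∈ s, f i) := by
  induction hs using Finset.Nonempty.cons_induction with
  | singleton i => simpa using h i (by simp)
  | cons i s hi hs ih =>
    rw [Finset.sum_cons]
    exact psPos_add (h i (by simp)) (ih fun j hj => h j (by simp [hj]))

lemma psPos_pow_inj {a b : PS} (ha : PSpos a) (hb : PSpos b) {n : ℕ} (hn : n ≠ 0)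
    (h : a ^ n = b ^ n) : a = b := by
  have hc : PSpos (∑ k ∈ Finset.range n, a ^ k * b ^ (n - 1 - k)) :=
    psPos_sum (Finset.nonempty_range_iff.mpr hn)
      (fun k _ => psPos_mul (psPos_pow ha k) (psPos_pow hb _))
  have hg := geom_sum₂_mul a b n
  rw [h, sub_self] at hg
  have := mul_eq_zero.mp hg
  rcases this with h1 | h1
  · exact absurd h1 hc.1
  · exact sub_eq_zero.mp h1

lemma prod_Icc_one (m : ℕ) (f : ℕ → PS) :
    ∏ l ∈ Finset.Icc 1 m, f l = ∏ l ∈ Finset.range m, f (l + 1) := by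
  rw [← Finset.Ico_add_one_right_eq_Icc, Finset.prod_Ico_eq_prod_range]
  exact Finset.prod_congr (by norm_num) (fun l _ => by rw [add_comm])


lemma square_rel (n : ℕ) (x : ℕ → ℕ → PS)
    (hx : ∀ i j, 1 ≤ j → j ≤ i → i ≤ n → x i j ≠ 0)
    (hcrit : ∀ i j, 1 ≤ j → j < i → i ≤ n → critCond n x i j)
    (e : ℕ) (he : e + 2 ≤ n) :
    Xi n x (e + 2) ^ 2 = Xi n x (e + 1) * Xi n x (e + 3) := by
  obtain ⟨M, hM⟩ : ∃ M, n = e + 2 + M := ⟨n - e - 2, by omega⟩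
  subst hM
  set S : ℕ → PS := fun l =>
    if l = 0 then x (e + 1) 1 else x (e + 2 + l) l + x (e + 1 + l) (l + 1) with hS
  have key1 : ∀ l, l < M →
      x (e + 2 + l) (l + 1) ^ 2 * S (l + 1)
        = x (e + 3 + l) (l + 1) * x (e + 2 + l) (l + 2) * S l := by
    intro l hl
    have hc := hcrit (e + 2 + l) (l + 1) (by omega) (by omega) (by omega)
    unfold critCond at hc
    rw [if_pos (by omega : e + 2 + l < e + 2 + M)] at hc
    rw [show e + 2 + l + 1 = e + 3 + l by omega, show e + 2 + l - 1 = e + 1 + l by omega,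
      show l + 1 + 1 = l + 2 by omega, show l + 1 - 1 = l by omega] at hc
    have hv : x (e + 2 + l) (l + 1) ≠ 0 := hx _ _ (by omega) (by omega) (by omega)
    have hu : x (e + 3 + l) (l + 1) ≠ 0 := hx _ _ (by omega) (by omega) (by omega)
    have hw : x (e + 2 + l) (l + 2) ≠ 0 := hx _ _ (by omega) (by omega) (by omega)
    simp only [hS, if_neg (Nat.succ_ne_zero l)]
    rw [show e + 2 + (l + 1) = e + 3 + l by omega, show e + 1 + (l + 1) = e + 2 + l by omega,
      show l + 1 + 1 = l + 2 by omega]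
    rcases Nat.eq_zero_or_pos l with rfl | hl1
    · rw [if_neg (by omega)] at hc
      rw [if_pos rfl]
      field_simp at hc
      linear_combination hc
    · rw [if_pos (by omega)] at hc
      rw [if_neg (by omega)]
      field_simp at hc
      linear_combination hc
  have key2 : x (e + 2 + M) (M + 1) ^ 2 = x (e + 2 + M) (M + 2) * S M := by
    have hc := hcrit (e + 2 + M) (M + 1) (by omega) (by omega) (by omega)
    unfold critCond at hc
    rw [if_neg (by omega)] at hc
    rw [show e + 2 + M - 1 = e + 1 + M by omega,
      show M + 1 + 1 = M + 2 by omega, show M + 1 - 1 = M by omega] at hc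
    have hv : x (e + 2 + M) (M + 1) ≠ 0 := hx _ _ (by omega) (by omega) (by omega)
    have hw : x (e + 2 + M) (M + 2) ≠ 0 := hx _ _ (by omega) (by omega) (by omega)
    rcases Nat.eq_zero_or_pos M with rfl | hM1
    · rw [if_neg (by omega)] at hc
      simp only [hS, if_pos rfl]
      simp only [Nat.add_zero] at hc ⊢
      field_simp at hc
      linear_combination hc
    · rw [if_pos (by omega)] at hc
      simp only [hS, if_neg (by omega : ¬ M = 0)]
      field_simp at hc
      linear_combination hc
  -- telescoping
  have T : ∀ m, m ≤ M →
      (∏ l ∈ Finset.range m, x (e + 2 + l) (l + 1) ^ 2) * S m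
        = (∏ l ∈ Finset.range m, (x (e + 3 + l) (l + 1) * x (e + 2 + l) (l + 2))) * S 0 := by
    intro m hm
    induction m with
    | zero => simp
    | succ m ih =>
      rw [Finset.prod_range_succ, Finset.prod_range_succ]
      calc (∏ l ∈ Finset.range m, x (e + 2 + l) (l + 1) ^ 2) * x (e + 2 + m) (m + 1) ^ 2
            * S (m + 1)
          = (∏ l ∈ Finset.range m, x (e + 2 + l) (l + 1) ^ 2)
            * (x (e + 2 + m) (m + 1) ^ 2 * S (m + 1)) := by ring
        _ = (∏ l ∈ Finset.range m, x (e + 2 + l) (l + 1) ^ 2)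
            * (x (e + 3 + m) (m + 1) * x (e + 2 + m) (m + 2) * S m) := by
              rw [key1 m (by omega)]
        _ = ((∏ l ∈ Finset.range m, x (e + 2 + l) (l + 1) ^ 2) * S m)
            * (x (e + 3 + m) (m + 1) * x (e + 2 + m) (m + 2)) := by ring
        _ = ((∏ l ∈ Finset.range m, (x (e + 3 + l) (l + 1) * x (e + 2 + l) (l + 2))) * S 0)
            * (x (e + 3 + m) (m + 1) * x (e + 2 + m) (m + 2)) := by rw [ih (by omega)]
        _ = _ := by ring
  -- assemble
  have hXiA : Xi (e + 2 + M) x (e + 2) = ∏ l ∈ Finset.range (M + 1), x (e + 2 + l) (l + 1) := by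
    unfold Xi
    rw [show e + 2 + M + 1 - (e + 2) = M + 1 by omega, prod_Icc_one]
    exact Finset.prod_congr rfl fun l _ => by rw [show e + 2 - 1 + (l + 1) = e + 2 + l by omega]
  have hXiB : Xi (e + 2 + M) x (e + 3) = ∏ l ∈ Finset.range M, x (e + 3 + l) (l + 1) := by
    unfold Xi
    rw [show e + 2 + M + 1 - (e + 3) = M by omega, prod_Icc_one]
    exact Finset.prod_congr rfl fun l _ => by rw [show e + 3 - 1 + (l + 1) = e + 3 + l by omega]
  have hXiC : Xi (e + 2 + M) x (e + 1) = ∏ l ∈ Finset.range (M + 2), x (e + 1 + l) (l + 1) := by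
    unfold Xi
    rw [show e + 2 + M + 1 - (e + 1) = M + 2 by omega, prod_Icc_one]
    exact Finset.prod_congr rfl fun l _ => by rw [show e + 1 - 1 + (l + 1) = e + 1 + l by omega]
  have hC : Xi (e + 2 + M) x (e + 1)
      = S 0 * (∏ l ∈ Finset.range M, x (e + 2 + l) (l + 2)) * x (e + 2 + M) (M + 2) := by
    rw [hXiC, Finset.prod_range_succ, Finset.prod_range_succ']
    have h1 : ∀ l, x (e + 1 + (l + 1)) (l + 1 + 1) = x (e + 2 + l) (l + 2) := by
      intro l
      rw [show e + 1 + (l + 1) = e + 2 + l by omega, show l + 1 + 1 = l + 2 by omega]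
    rw [show e + 1 + (M + 1) = e + 2 + M by omega, show M + 1 + 1 = M + 2 by omega]
    rw [Finset.prod_congr rfl fun l _ => h1 l]
    simp only [hS, if_pos rfl]
    ring
  rw [hXiA, hXiB, hC]
  rw [← Finset.prod_pow, Finset.prod_range_succ]
  calc (∏ l ∈ Finset.range M, x (e + 2 + l) (l + 1) ^ 2) * x (e + 2 + M) (M + 1) ^ 2
      = (∏ l ∈ Finset.range M, x (e + 2 + l) (l + 1) ^ 2) * (x (e + 2 + M) (M + 2) * S M) := by
        rw [key2]
    _ = ((∏ l ∈ Finset.range M, x (e + 2 + l) (l + 1) ^ 2) * S M) * x (e + 2 + M) (M + 2) := by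
        ring
    _ = ((∏ l ∈ Finset.range M, (x (e + 3 + l) (l + 1) * x (e + 2 + l) (l + 2))) * S 0)
        * x (e + 2 + M) (M + 2) := by rw [T M le_rfl]
    _ = _ := by
        rw [Finset.prod_mul_distrib]
        ring


lemma prod_single_one (s : Finset ℕ) (f : ℕ → ℝ) :
    ∏ i ∈ s, (HahnSeries.single (f i) (1 : ℂ) : PS) = HahnSeries.single (∑ i ∈ s, f i) 1 := by
  induction s using Finset.induction with
  | empty => simp [HahnSeries.single_zero_one]
  | insert _ _ hi ih =>
    rw [Finset.prod_insert hi, Finset.sum_insert hi, ih, HahnSeries.single_mul_single, one_mul]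

lemma single_one_pow (a : ℝ) (n : ℕ) :
    (HahnSeries.single a (1 : ℂ) : PS) ^ n = HahnSeries.single ((n : ℝ) * a) 1 := by
  induction n with
  | zero => simp [HahnSeries.single_zero_one]
  | succ n ih =>
    rw [pow_succ, ih, HahnSeries.single_mul_single, mul_one]
    congr 1
    push_cast
    ring

theorem stmt9 (n : ℕ) (hn : 2 ≤ n) (lam : ℕ → ℝ)
    (hdom : ∀ i, 1 ≤ i → i + 1 ≤ n → lam (i + 1) ≤ lam i)
    (ell : ℝ) (hell : ell = (∑ i ∈ Finset.Icc 1 n, lam i) / n)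
    (x : ℕ → ℕ → PS) (hx : ∀ i j, 1 ≤ j → j ≤ i → i ≤ n → PSpos (x i j))
    (hstar : ∀ i, 1 ≤ i → i ≤ n → x i i = HahnSeries.single (lam i) 1)
    (hcrit : ∀ i j, 1 ≤ j → j < i → i ≤ n → critCond n x i j) :
    ∀ i, 1 ≤ i → i ≤ n → Xi n x i / Xi n x (i + 1) = HahnSeries.single ell 1 := by
  have hxne : ∀ i j, 1 ≤ j → j ≤ i → i ≤ n → x i j ≠ 0 :=
    fun i j h1 h2 h3 => (hx i j h1 h2 h3).1
  have hXpos : ∀ d, 1 ≤ d → d ≤ n → PSpos (Xi n x d) := by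
    intro d h1 h2
    unfold Xi
    apply psPos_prod (Finset.nonempty_Icc.mpr (by omega))
    intro l hl
    simp only [Finset.mem_Icc] at hl
    exact hx _ _ (by omega) (by omega) (by omega)
  have hXtop : Xi n x (n + 1) = 1 := by
    unfold Xi
    rw [show n + 1 - (n + 1) = 0 by omega]
    simp
  set ρ : PS := Xi n x 1 / Xi n x 2 with hρ
  have hstep : ∀ d, 1 ≤ d → d ≤ n → Xi n x d = ρ * Xi n x (d + 1) := by
    intro d hd1
    induction d, hd1 using Nat.le_induction with
    | base =>
      intro h2
      rw [hρ, div_mul_cancel₀ _ (hXpos 2 (by omega) hn).1]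
    | succ d hd ih =>
      intro h2
      obtain ⟨e, rfl⟩ : ∃ e, d = e + 1 := ⟨d - 1, by omega⟩
      have hsq := square_rel n x hxne hcrit e (by omega)
      have hih : Xi n x (e + 1) = ρ * Xi n x (e + 2) := ih (by omega)
      have hne : Xi n x (e + 2) ≠ 0 := (hXpos (e + 2) (by omega) (by omega)).1
      show Xi n x (e + 2) = ρ * Xi n x (e + 3)
      apply mul_left_cancel₀ hne
      rw [hih] at hsq
      linear_combination hsq
  have hpow : ∀ m, m ≤ n → Xi n x 1 = ρ ^ m * Xi n x (m + 1) := by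
    intro m
    induction m with
    | zero => simp
    | succ m ih =>
      intro h
      rw [ih (by omega), hstep (m + 1) (by omega) h, pow_succ]
      ring
  have hXi1 : Xi n x 1 = HahnSeries.single (∑ i ∈ Finset.Icc 1 n, lam i) 1 := by
    unfold Xi
    rw [show n + 1 - 1 = n by omega]
    rw [Finset.prod_congr rfl (fun l hl => by
      simp only [Finset.mem_Icc] at hl
      rw [show (1 : ℕ) - 1 + l = l by omega, hstar l (by omega) (by omega)])]
    exact prod_single_one _ _
  have hρpow : ρ ^ n = HahnSeries.single (∑ i ∈ Finset.Icc 1 n, lam i) 1 := by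
    rw [← hXi1, hpow n le_rfl, hXtop, mul_one]
  have hρpos : PSpos ρ := by
    refine psPos_of_mul_right (b := Xi n x 2) ?_ (hXpos 2 (by omega) hn)
    rw [← hstep 1 le_rfl (by omega)]
    exact hXpos 1 le_rfl (by omega)
  have hρeq : ρ = HahnSeries.single ell 1 := by
    apply psPos_pow_inj hρpos (psPos_single ell) (show n ≠ 0 by omega)
    rw [hρpow, single_one_pow]
    congr 1
    rw [hell]
    field_simp
  intro i hi1 hin
  have hne : Xi n x (i + 1) ≠ 0 := by
    rcases eq_or_lt_of_le hin with rfl | h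
    · rw [hXtop]; exact one_ne_zero
    · exact (hXpos (i + 1) (by omega) (by omega)).1
  rw [hstep i hi1 hin, mul_div_assoc, div_self hne, mul_one, hρeq]
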